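/- For the three-web on the domain {(x¹,x²,y¹,y²) ∈ ℝ⁴ : x¹y² ≠ −1} given by f¹ = x¹ + y¹ + (1/2)(x¹)²y², f² = x² + y² + (1/2)x¹(y²)², with Δ := 1 + x¹y², the connection coefficients are Γ¹₁₂ = −x¹/Δ², Γ²₁₂ = −y²/Δ², all other Γ^i_{jk} = 0, and the torsion covector is a₁ = −y²/Δ², a₂ = x¹/Δ². -/

import Mathlib

noncomputable section

open Matrix

/-- Partial derivative of `g` with respect to the `j`-th coordinate at the point `x`. -/
def pd (j : Fin 2) (g : (Fin 2 → ℝ) → ℝ) (x : Fin 2 → ℝ) : ℝ :=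
  deriv (fun t => g (Function.update x j t)) (x j)

variable (f : Fin 2 → (Fin 2 → ℝ) → (Fin 2 → ℝ) → ℝ)

/-- Jacobian matrix `f̄ = (∂fⁱ/∂xʲ)` with respect to the first group of variables. -/
def fbar (x y : Fin 2 → ℝ) : Matrix (Fin 2) (Fin 2) ℝ :=
  Matrix.of fun i j => pd j (fun x' => f i x' y) x

/-- Jacobian matrix `f̃ = (∂fⁱ/∂yʲ)` with respect to the second group of variables. -/
def ftil (x y : Fin 2 → ℝ) : Matrix (Fin 2) (Fin 2) ℝ :=
  Matrix.of fun i j => pd j (fun y' => f i x y') y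

/-- Mixed second partial derivative `∂²fⁱ/∂xˡ∂yᵐ`. -/
def d2 (i l m : Fin 2) (x y : Fin 2 → ℝ) : ℝ :=
  pd m (fun y' => pd l (fun x' => f i x' y') x) y

/-- Connection coefficients
`Γⁱⱼₖ = −∑_{l,m} (∂²fⁱ/∂xˡ∂yᵐ) ḡˡⱼ g̃ᵐₖ`, where `ḡ = f̄⁻¹`, `g̃ = f̃⁻¹`. -/
def Gam (i j k : Fin 2) (x y : Fin 2 → ℝ) : ℝ :=
  - ∑ l : Fin 2, ∑ m : Fin 2,
      d2 f i l m x y * (fbar f x y)⁻¹ l j * (ftil f x y)⁻¹ m k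

/-- Torsion covector `aⱼ = ∑ₖ (Γᵏⱼₖ − Γᵏₖⱼ)`. -/
def aCov (j : Fin 2) (x y : Fin 2 → ℝ) : ℝ :=
  ∑ k : Fin 2, (Gam f k j k x y - Gam f k k j x y)

/-- Covariant derivative `p_{ik} = ∑ₘ (∂aᵢ/∂xᵐ) ḡᵐₖ − ∑ⱼ aⱼ Γʲₖᵢ`. -/
def pCov (i k : Fin 2) (x y : Fin 2 → ℝ) : ℝ :=
  (∑ m : Fin 2, pd m (fun x' => aCov f i x' y) x * (fbar f x y)⁻¹ m k)
    - ∑ j : Fin 2, aCov f j x y * Gam f j k i x y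

/-- Covariant derivative `q_{ik} = ∑ₘ (∂aᵢ/∂yᵐ) g̃ᵐₖ − ∑ⱼ aⱼ Γʲᵢₖ`. -/
def qCov (i k : Fin 2) (x y : Fin 2 → ℝ) : ℝ :=
  (∑ m : Fin 2, pd m (fun y' => aCov f i x y') y * (ftil f x y)⁻¹ m k)
    - ∑ j : Fin 2, aCov f j x y * Gam f j i k x y

/-- Isoclinicity invariant `p = (p₁₂ − p₂₁)/2`. -/
def pIso (x y : Fin 2 → ℝ) : ℝ := (pCov f 0 1 x y - pCov f 1 0 x y) / 2

/-- Isoclinicity invariant `q = (q₁₂ − q₂₁)/2`. -/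
def qIso (x y : Fin 2 → ℝ) : ℝ := (qCov f 0 1 x y - qCov f 1 0 x y) / 2


/-- The web `f¹ = x¹ + y¹ + (1/2)(x¹)²y²`, `f² = x² + y² + (1/2)x¹(y²)²`.
(Indices: `x 0 ↦ x¹`, `x 1 ↦ x²`, `y 0 ↦ y¹`, `y 1 ↦ y²`.) -/
noncomputable def webF : Fin 2 → (Fin 2 → ℝ) → (Fin 2 → ℝ) → ℝ :=
  ![fun x y => x 0 + y 0 + (1/2) * (x 0)^2 * y 1,
    fun x y => x 1 + y 1 + (1/2) * x 0 * (y 1)^2]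


/- auxiliary lemmas -/

lemma pdx00 (x y : Fin 2 → ℝ) : pd 0 (fun x' => webF 0 x' y) x = 1 + x 0 * y 1 := by
  have hfun : (fun t : ℝ => webF 0 (Function.update x 0 t) y)
      = fun t => t + y 0 + 1/2 * t^2 * y 1 := by
    funext t; simp [webF, Function.update]
  rw [pd, hfun]
  have h : HasDerivAt (fun t : ℝ => t + y 0 + 1/2 * t^2 * y 1) (1 + x 0 * y 1) (x 0) := by
    have h1 := ((hasDerivAt_pow 2 (x 0)).const_mul (1/2 : ℝ)).mul_const (y 1)
    exact (((hasDerivAt_id (x 0)).add_const (y 0)).add h1).congr_deriv (by push_cast; ring)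
  exact h.deriv

lemma pdx01 (x y : Fin 2 → ℝ) : pd 1 (fun x' => webF 0 x' y) x = 0 := by
  have hfun : (fun t : ℝ => webF 0 (Function.update x 1 t) y)
      = fun _ => x 0 + y 0 + 1/2 * (x 0)^2 * y 1 := by
    funext t; simp [webF, Function.update]
  rw [pd, hfun, deriv_const]

lemma pdx10 (x y : Fin 2 → ℝ) : pd 0 (fun x' => webF 1 x' y) x = 1/2 * (y 1)^2 := by
  have hfun : (fun t : ℝ => webF 1 (Function.update x 0 t) y)
      = fun t => x 1 + y 1 + 1/2 * t * (y 1)^2 := by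
    funext t; simp [webF, Function.update]
  rw [pd, hfun]
  have h : HasDerivAt (fun t : ℝ => x 1 + y 1 + 1/2 * t * (y 1)^2) (1/2 * (y 1)^2) (x 0) := by
    have h1 := (((hasDerivAt_id (x 0)).const_mul (1/2 : ℝ)).mul_const ((y 1)^2)).const_add
      (x 1 + y 1)
    exact h1.congr_deriv (by ring)
  exact h.deriv

lemma pdx11 (x y : Fin 2 → ℝ) : pd 1 (fun x' => webF 1 x' y) x = 1 := by
  have hfun : (fun t : ℝ => webF 1 (Function.update x 1 t) y)
      = fun t => t + y 1 + 1/2 * x 0 * (y 1)^2 := by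
    funext t; simp [webF, Function.update]
  rw [pd, hfun]
  exact (((hasDerivAt_id (x 1)).add_const (y 1)).add_const (1/2 * x 0 * (y 1)^2)).deriv

lemma pdy00 (x y : Fin 2 → ℝ) : pd 0 (fun y' => webF 0 x y') y = 1 := by
  have hfun : (fun t : ℝ => webF 0 x (Function.update y 0 t))
      = fun t => x 0 + t + 1/2 * (x 0)^2 * y 1 := by
    funext t; simp [webF, Function.update]
  rw [pd, hfun]
  exact (((hasDerivAt_id (y 0)).const_add (x 0)).add_const (1/2 * (x 0)^2 * y 1)).deriv

lemma pdy01 (x y : Fin 2 → ℝ) : pd 1 (fun y' => webF 0 x y') y = 1/2 * (x 0)^2 := by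
  have hfun : (fun t : ℝ => webF 0 x (Function.update y 1 t))
      = fun t => x 0 + y 0 + 1/2 * (x 0)^2 * t := by
    funext t; simp [webF, Function.update]
  rw [pd, hfun]
  have h : HasDerivAt (fun t : ℝ => x 0 + y 0 + 1/2 * (x 0)^2 * t) (1/2 * (x 0)^2) (y 1) := by
    have h1 := ((hasDerivAt_id (y 1)).const_mul (1/2 * (x 0)^2)).const_add (x 0 + y 0)
    exact h1.congr_deriv (by ring)
  exact h.deriv

lemma pdy10 (x y : Fin 2 → ℝ) : pd 0 (fun y' => webF 1 x y') y = 0 := by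
  have hfun : (fun t : ℝ => webF 1 x (Function.update y 0 t))
      = fun _ => x 1 + y 1 + 1/2 * x 0 * (y 1)^2 := by
    funext t; simp [webF, Function.update]
  rw [pd, hfun, deriv_const]

lemma pdy11 (x y : Fin 2 → ℝ) : pd 1 (fun y' => webF 1 x y') y = 1 + x 0 * y 1 := by
  have hfun : (fun t : ℝ => webF 1 x (Function.update y 1 t))
      = fun t => x 1 + t + 1/2 * x 0 * t^2 := by
    funext t; simp [webF, Function.update]
  rw [pd, hfun]
  have h : HasDerivAt (fun t : ℝ => x 1 + t + 1/2 * x 0 * t^2) (1 + x 0 * y 1) (y 1) := by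
    have h1 := ((hasDerivAt_id (y 1)).const_add (x 1)).add
      ((hasDerivAt_pow 2 (y 1)).const_mul (1/2 * x 0))
    exact h1.congr_deriv (by norm_num; ring)
  exact h.deriv

lemma fbar_webF (x y : Fin 2 → ℝ) :
    fbar webF x y = !![1 + x 0 * y 1, 0; 1/2 * (y 1)^2, 1] := by
  ext i j
  fin_cases i <;> fin_cases j <;>
    simp [fbar, pdx00, pdx01, pdx10, pdx11]

lemma ftil_webF (x y : Fin 2 → ℝ) :
    ftil webF x y = !![1, 1/2 * (x 0)^2; 0, 1 + x 0 * y 1] := by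
  ext i j
  fin_cases i <;> fin_cases j <;>
    simp [ftil, pdy00, pdy01, pdy10, pdy11]

lemma d2_webF_00 (x y : Fin 2 → ℝ) (m : Fin 2) :
    d2 webF 0 0 m x y = if m = 1 then x 0 else 0 := by
  have hfun : (fun y' => pd 0 (fun x' => webF 0 x' y') x) = fun y' => 1 + x 0 * y' 1 := by
    funext y'; exact pdx00 x y'
  rw [d2, hfun]
  fin_cases m
  · have : (fun t : ℝ => 1 + x 0 * (Function.update y 0 t) 1)
        = fun _ => 1 + x 0 * y 1 := by
      funext t; simp [Function.update]
    simp [pd, this]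
  · have hfun2 : (fun t : ℝ => 1 + x 0 * (Function.update y 1 t) 1)
        = fun t => 1 + x 0 * t := by
      funext t; simp [Function.update]
    have h : HasDerivAt (fun t : ℝ => 1 + x 0 * t) (x 0) (y 1) := by
      have h1 := ((hasDerivAt_id (y 1)).const_mul (x 0)).const_add 1
      exact h1.congr_deriv (by ring)
    simp [pd, hfun2, h.deriv]

lemma d2_webF_01 (x y : Fin 2 → ℝ) (m : Fin 2) : d2 webF 0 1 m x y = 0 := by
  have hfun : (fun y' => pd 1 (fun x' => webF 0 x' y') x) = fun _ => (0:ℝ) := by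
    funext y'; exact pdx01 x y'
  rw [d2, hfun]
  simp [pd]

lemma d2_webF_10 (x y : Fin 2 → ℝ) (m : Fin 2) :
    d2 webF 1 0 m x y = if m = 1 then y 1 else 0 := by
  have hfun : (fun y' => pd 0 (fun x' => webF 1 x' y') x) = fun y' => 1/2 * (y' 1)^2 := by
    funext y'; exact pdx10 x y'
  rw [d2, hfun]
  fin_cases m
  · have : (fun t : ℝ => 1/2 * ((Function.update y 0 t) 1)^2)
        = fun _ => 1/2 * (y 1)^2 := by
      funext t; simp [Function.update]
    simp [pd, this]
  · have hfun2 : (fun t : ℝ => 1/2 * ((Function.update y 1 t) 1)^2)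
        = fun t => 1/2 * t^2 := by
      funext t; simp [Function.update]
    have h : HasDerivAt (fun t : ℝ => 1/2 * t^2) (y 1) (y 1) := by
      have h1 := (hasDerivAt_pow 2 (y 1)).const_mul (1/2 : ℝ)
      exact h1.congr_deriv (by push_cast; ring)
    simp [pd, hfun2, h.deriv]

lemma d2_webF_11 (x y : Fin 2 → ℝ) (m : Fin 2) : d2 webF 1 1 m x y = 0 := by
  have hfun : (fun y' => pd 1 (fun x' => webF 1 x' y') x) = fun _ => (1:ℝ) := by
    funext y'; exact pdx11 x y'
  rw [d2, hfun]
  simp [pd]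


/-- For the web `webF` on the domain `x¹y² ≠ −1`, with `Δ = 1 + x¹y²`, the
connection coefficients are `Γ¹₁₂ = −x¹/Δ²`, `Γ²₁₂ = −y²/Δ²`, all other
`Γ^i_{jk} = 0`, and the torsion covector is `a₁ = −y²/Δ²`, `a₂ = x¹/Δ²`. -/
theorem webF_connection_and_torsion (x y : Fin 2 → ℝ)
    (h : x 0 * y 1 ≠ -1) (Δ : ℝ) (hΔ : Δ = 1 + x 0 * y 1) :
    Gam webF 0 0 1 x y = -(x 0) / Δ^2 ∧
    Gam webF 1 0 1 x y = -(y 1) / Δ^2 ∧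
    Gam webF 0 0 0 x y = 0 ∧ Gam webF 0 1 0 x y = 0 ∧ Gam webF 0 1 1 x y = 0 ∧
    Gam webF 1 0 0 x y = 0 ∧ Gam webF 1 1 0 x y = 0 ∧ Gam webF 1 1 1 x y = 0 ∧
    aCov webF 0 x y = -(y 1) / Δ^2 ∧
    aCov webF 1 x y = x 0 / Δ^2 := by
  subst hΔ
  have hΔ0 : 1 + x 0 * y 1 ≠ 0 := by
    intro hc; apply h; linarith
  have hfb : (fbar webF x y)⁻¹
      = !![(1 + x 0 * y 1)⁻¹, 0; -(1/2) * (y 1)^2 * (1 + x 0 * y 1)⁻¹, 1] := by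
    apply Matrix.inv_eq_right_inv
    rw [fbar_webF]
    ext i j
    fin_cases i <;> fin_cases j <;>
      simp [Matrix.mul_apply, Fin.sum_univ_two] <;> field_simp <;> ring
  have hft : (ftil webF x y)⁻¹
      = !![1, -(1/2) * (x 0)^2 * (1 + x 0 * y 1)⁻¹; 0, (1 + x 0 * y 1)⁻¹] := by
    apply Matrix.inv_eq_right_inv
    rw [ftil_webF]
    ext i j
    fin_cases i <;> fin_cases j <;>
      simp [Matrix.mul_apply, Fin.sum_univ_two] <;> field_simp <;> ring
  have G001 : Gam webF 0 0 1 x y = -(x 0) / (1 + x 0 * y 1)^2 := by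
    simp [Gam, Fin.sum_univ_two, d2_webF_00, d2_webF_01, d2_webF_10, d2_webF_11, hfb, hft]
    rw [div_eq_mul_inv, ← inv_pow]; ring
  have G101 : Gam webF 1 0 1 x y = -(y 1) / (1 + x 0 * y 1)^2 := by
    simp [Gam, Fin.sum_univ_two, d2_webF_00, d2_webF_01, d2_webF_10, d2_webF_11, hfb, hft]
    rw [div_eq_mul_inv, ← inv_pow]; ring
  have G000 : Gam webF 0 0 0 x y = 0 := by
    simp [Gam, Fin.sum_univ_two, d2_webF_00, d2_webF_01, d2_webF_10, d2_webF_11, hfb, hft]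
  have G010 : Gam webF 0 1 0 x y = 0 := by
    simp [Gam, Fin.sum_univ_two, d2_webF_00, d2_webF_01, d2_webF_10, d2_webF_11, hfb, hft]
  have G011 : Gam webF 0 1 1 x y = 0 := by
    simp [Gam, Fin.sum_univ_two, d2_webF_00, d2_webF_01, d2_webF_10, d2_webF_11, hfb, hft]
  have G100 : Gam webF 1 0 0 x y = 0 := by
    simp [Gam, Fin.sum_univ_two, d2_webF_00, d2_webF_01, d2_webF_10, d2_webF_11, hfb, hft]
  have G110 : Gam webF 1 1 0 x y = 0 := by
    simp [Gam, Fin.sum_univ_two, d2_webF_00, d2_webF_01, d2_webF_10, d2_webF_11, hfb, hft]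
  have G111 : Gam webF 1 1 1 x y = 0 := by
    simp [Gam, Fin.sum_univ_two, d2_webF_00, d2_webF_01, d2_webF_10, d2_webF_11, hfb, hft]
  refine ⟨G001, G101, G000, G010, G011, G100, G110, G111, ?_, ?_⟩
  · rw [aCov, Fin.sum_univ_two, G101, G110]
    ring
  · rw [aCov, Fin.sum_univ_two, G010, G001, G111]
    ring


end
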